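/- Let q be a power of an odd prime with q ≥ 5, let m ≥ 2 be an integer that does not divide q−1 and such that every prime factor of m divides q−1 and, if 4 divides m, then 4 divides q−1. Let l = ord_m(q), assume l divides m and set k = m/l, and let t = (q^l − 1)/m (an integer since q^l ≡ 1 (mod m)). Let a ∈ F_q be an element of multiplicative order e = ∏_{p prime, p ∣ m} p^{v_p(q−1)}. Then the multiplicative order of a^t in the group F_q^* equals k. -/

import Mathlib

/-- Lemma 3: with `l = ord_m q`, `k = m / l` and `t = (q^l - 1)/m`, the element `a^t`
has multiplicative order exactly `k` in `F_q^*`. -/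
private lemma geom_nat (q n : ℕ) (hq : 1 ≤ q) :
    q ^ n - 1 = (q - 1) * ∑ i ∈ Finset.range n, q ^ i := by
  have h := geom_sum_mul (q : ℤ) n
  have h1 : 1 ≤ q ^ n := Nat.one_le_pow _ _ (by omega)
  zify [h1, hq]
  linarith [h]

private lemma sum_odd (q n : ℕ) (hq : q % 2 = 1) (hn : ¬ 2 ∣ n) :
    ¬ 2 ∣ ∑ i ∈ Finset.range n, q ^ i := by
  have hmod : (∑ i ∈ Finset.range n, q ^ i) % 2 = 1 := by
    rw [Finset.sum_nat_mod]
    rw [Finset.sum_congr rfl (fun i _ => by rw [Nat.pow_mod, hq, one_pow])]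
    simp only [Finset.sum_const, Finset.card_range, smul_eq_mul, mul_one]
    omega
  omega

theorem order_of_a_pow_t
    (F : Type*) [Field F] [Fintype F] (q m : ℕ)
    (hq : Fintype.card F = q)
    (hodd : ∃ p n : ℕ, p.Prime ∧ Odd p ∧ q = p ^ n)
    (hq5 : 5 ≤ q)
    (hm2 : 2 ≤ m)
    (hmndvd : ¬ m ∣ (q - 1))
    (hprime : ∀ p : ℕ, p.Prime → p ∣ m → p ∣ (q - 1))
    (h4 : 4 ∣ m → 4 ∣ (q - 1))
    (l k t : ℕ)
    (hl : l = orderOf ((q : ZMod m)))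
    (hldvd : l ∣ m)
    (hk : k = m / l)
    (ht : t = (q ^ l - 1) / m)
    (a : F)
    (ha : orderOf a = ∏ p ∈ m.primeFactors, p ^ (q - 1).factorization p) :
    orderOf (a ^ t) = k := by
  have hm0 : m ≠ 0 := by omega
  haveI : NeZero m := ⟨hm0⟩
  -- q is odd
  have hq2 : q % 2 = 1 := by
    obtain ⟨p, n, pp, podd, rfl⟩ := hodd
    have hp2 : p % 2 = 1 := Nat.odd_iff.mp podd
    have : ¬ 2 ∣ p ^ n := fun h => by
      have := Nat.Prime.dvd_of_dvd_pow Nat.prime_two h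
      omega
    omega
  -- no prime of m divides q
  have hpq : ∀ p : ℕ, p.Prime → p ∣ m → ¬ p ∣ q := by
    intro p pp hpm hpd
    have h1 : p ∣ q - 1 := hprime p pp hpm
    have h2 : p ∣ q - (q - 1) := Nat.dvd_sub hpd h1
    have h3 : q - (q - 1) = 1 := by omega
    rw [h3, Nat.dvd_one] at h2
    exact pp.one_lt.ne' h2
  have hcop : Nat.Coprime q m := by
    by_contra h
    have hg0 : Nat.gcd q m ≠ 0 := fun h0 => hm0 (Nat.eq_zero_of_gcd_eq_zero_right h0)
    have hg1 : Nat.gcd q m ≠ 1 := h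
    have pp := Nat.minFac_prime hg1
    exact hpq _ pp ((Nat.minFac_dvd _).trans (Nat.gcd_dvd_right q m))
      ((Nat.minFac_dvd _).trans (Nat.gcd_dvd_left q m))
  -- l is positive
  have hl0 : 0 < l := by
    rw [hl, ← ZMod.coe_unitOfCoprime q hcop, orderOf_units]
    exact orderOf_pos _
  -- casting characterisation
  have cast_iff : ∀ n : ℕ, (q : ZMod m) ^ n = 1 ↔ m ∣ q ^ n - 1 := by
    intro n
    have h1n : 1 ≤ q ^ n := Nat.one_le_pow _ _ (by omega)
    have hcast : ((q ^ n - 1 : ℕ) : ZMod m) = (q : ZMod m) ^ n - 1 := by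
      rw [Nat.cast_sub h1n]
      push_cast
      ring
    rw [← ZMod.natCast_eq_zero_iff, hcast, sub_eq_zero]
  have hmdvd : m ∣ q ^ l - 1 := (cast_iff l).mp (by rw [hl]; exact pow_orderOf_eq_one _)
  have hqln : q ^ l - 1 ≠ 0 := by
    have : q ≤ q ^ l := Nat.le_self_pow hl0.ne' q
    omega
  have htm : m * t = q ^ l - 1 := by rw [ht]; exact Nat.mul_div_cancel' hmdvd
  have ht0 : t ≠ 0 := by
    intro h
    rw [h, mul_zero] at htm
    exact hqln htm.symm
  -- the exact LTE computation
  have key : ∀ n : ℕ, n ≠ 0 → (2 ∣ n → 4 ∣ q - 1) → ∀ p, p.Prime → p ∣ m →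
      (q ^ n - 1).factorization p = (q - 1).factorization p + n.factorization p := by
    intro n hn h2 p pp hpm
    have hpq1 : p ∣ q - 1 := hprime p pp hpm
    have hpnq : ¬ p ∣ q := hpq p pp hpm
    have hqn0 : q ^ n - 1 ≠ 0 := by
      have : q ≤ q ^ n := Nat.le_self_pow hn q
      omega
    rcases eq_or_ne p 2 with rfl | hp2
    · rcases Nat.even_or_odd n with hev | hod
      · have h4q := h2 hev.two_dvd
        have hlte := padicValNat.pow_two_sub_pow (x := q) (y := 1) (by omega)
          (by simpa using hpq1) (by simpa using hpnq) hn hev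
        simp only [one_pow] at hlte
        have hv1 : padicValNat 2 (q + 1) = 1 := by
          have hd1 : (2:ℕ) ^ 1 ∣ q + 1 := by omega
          have hd2 : ¬ (2:ℕ) ^ 2 ∣ q + 1 := by
            intro hh
            omega
          rw [← Nat.factorization_def _ Nat.prime_two]
          have e1 := (Nat.Prime.pow_dvd_iff_le_factorization Nat.prime_two
            (by omega : q + 1 ≠ 0)).mp hd1
          have e2 : ¬ 2 ≤ (q+1).factorization 2 := fun hle =>
            hd2 ((Nat.Prime.pow_dvd_iff_le_factorization Nat.prime_two
              (by omega : q + 1 ≠ 0)).mpr hle)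
          omega
        rw [Nat.factorization_def _ Nat.prime_two, Nat.factorization_def _ Nat.prime_two,
          Nat.factorization_def _ Nat.prime_two]
        omega
      · have hnd2 : ¬ 2 ∣ n := by
          rw [Nat.odd_iff] at hod
          omega
        have hS := sum_odd q n hq2 hnd2
        have hgeom : q ^ n - 1 = (q - 1) * ∑ i ∈ Finset.range n, q ^ i :=
          geom_nat q n (by omega)
        have hS0 : (∑ i ∈ Finset.range n, q ^ i) ≠ 0 := fun h => hS (h ▸ dvd_zero 2)
        rw [hgeom, Nat.factorization_mul (by omega) hS0, Finsupp.add_apply,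
          Nat.factorization_eq_zero_of_not_dvd hS,
          Nat.factorization_eq_zero_of_not_dvd hnd2]
    · haveI : Fact p.Prime := ⟨pp⟩
      have hlte := padicValNat.pow_sub_pow (p := p) (pp.odd_of_ne_two hp2) (x := q) (y := 1)
        (by omega) (by simpa using hpq1) hpnq hn
      simp only [one_pow] at hlte
      rw [Nat.factorization_def _ pp, Nat.factorization_def _ pp, Nat.factorization_def _ pp]
      exact hlte
  -- if l is even then 4 divides q - 1
  have h2l : 2 ∣ l → 4 ∣ q - 1 := by
    intro h2L
    by_cases h4m : 4 ∣ m
    · exact h4 h4m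
    · exfalso
      set n := ordCompl[2] m with hn
      have hn0 : n ≠ 0 := (Nat.ordCompl_pos 2 hm0).ne'
      have hnodd : ¬ 2 ∣ n := Nat.not_dvd_ordCompl Nat.prime_two hm0
      have hqn0 : q ^ n - 1 ≠ 0 := by
        have : q ≤ q ^ n := Nat.le_self_pow hn0 q
        omega
      have hmn : m ∣ q ^ n - 1 := by
        rw [← Nat.factorization_le_iff_dvd hm0 hqn0]
        rw [Finsupp.le_def]
        intro p
        by_cases hpp : p.Prime
        · by_cases hpm : p ∣ m
          · rcases eq_or_ne p 2 with rfl | hp2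
            · have h1 : m.factorization 2 ≤ 1 := by
                by_contra hgt
                exact h4m (by
                  have h22 : (2:ℕ) ^ 2 ∣ m := (Nat.Prime.pow_dvd_iff_le_factorization
                    Nat.prime_two hm0).mpr (by omega)
                  norm_num at h22
                  exact h22)
              have hdvd2 : 2 ∣ q ^ n - 1 := by
                have : q ^ n % 2 = 1 := by rw [Nat.pow_mod, hq2, one_pow]; rfl
                omega
              have h2' : 1 ≤ (q ^ n - 1).factorization 2 :=
                (Nat.Prime.pow_dvd_iff_le_factorization Nat.prime_two hqn0).mp
                  (by simpa using hdvd2)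
              omega
            · rw [key n hn0 (fun h => absurd h hnodd) p hpp hpm]
              have hnp : n.factorization p = m.factorization p := by
                rw [hn, Nat.factorization_ordCompl, Finsupp.erase_ne hp2]
              omega
          · simp [Nat.factorization_eq_zero_of_not_dvd hpm]
        · simp [Nat.factorization_eq_zero_of_not_prime _ hpp]
      have hln : l ∣ n := by
        rw [hl]
        exact orderOf_dvd_of_pow_eq_one ((cast_iff n).mpr hmn)
      exact hnodd (h2L.trans hln)
  -- factorization of e := orderOf a
  set e := orderOf a with he
  have hed : ∀ p', e.factorization p' =
      if p' ∈ m.primeFactors then (q - 1).factorization p' else 0 := by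
    intro p'
    rw [ha, Nat.factorization_prod
      (fun p hp => pow_ne_zero _ (Nat.prime_of_mem_primeFactors hp).pos.ne')]
    rw [Finsupp.finset_sum_apply]
    rw [Finset.sum_congr rfl (fun p hp => by
      rw [Nat.Prime.factorization_pow (Nat.prime_of_mem_primeFactors hp),
        Finsupp.single_apply])]
    exact Finset.sum_ite_eq' _ _ _
  have he0 : e ≠ 0 := by
    rw [ha]
    exact Finset.prod_ne_zero_iff.mpr
      (fun p hp => pow_ne_zero _ (Nat.prime_of_mem_primeFactors hp).pos.ne')
  have hk0 : k ≠ 0 := by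
    rw [hk]
    exact (Nat.div_pos (Nat.le_of_dvd (by omega) hldvd) hl0).ne'
  rw [orderOf_pow' a ht0, ← he]
  have hg0 : Nat.gcd e t ≠ 0 := fun h => he0 (Nat.eq_zero_of_gcd_eq_zero_left h)
  suffices hsuf : k * Nat.gcd e t = e by
    exact Nat.div_eq_of_eq_mul_left (Nat.pos_of_ne_zero hg0) hsuf.symm
  apply Nat.eq_of_factorization_eq (mul_ne_zero hk0 hg0) he0
  intro p
  rw [Nat.factorization_mul hk0 hg0, Finsupp.add_apply,
    Nat.factorization_gcd he0 ht0, Finsupp.inf_apply]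
  have hkf : k.factorization p = m.factorization p - l.factorization p := by
    rw [hk, Nat.factorization_div hldvd, Finsupp.tsub_apply]
  by_cases hpm : p ∈ m.primeFactors
  · obtain ⟨pp, hpmd, -⟩ := Nat.mem_primeFactors.mp hpm
    have hEq : (q ^ l - 1).factorization p =
        (q - 1).factorization p + l.factorization p := key l hl0.ne' h2l p pp hpmd
    have htf : m.factorization p + t.factorization p = (q ^ l - 1).factorization p := by
      rw [← htm, Nat.factorization_mul hm0 ht0, Finsupp.add_apply]
    have hLA : l.factorization p ≤ m.factorization p :=
      Finsupp.le_def.mp ((Nat.factorization_le_iff_dvd hl0.ne' hm0).mpr hldvd) p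
    have hef : e.factorization p = (q - 1).factorization p := by rw [hed p, if_pos hpm]
    rw [hef, hkf]
    omega
  · have hef : e.factorization p = 0 := by rw [hed p, if_neg hpm]
    have hmf : m.factorization p = 0 := by
      rwa [← Finsupp.notMem_support_iff, Nat.support_factorization]
    rw [hef, hkf]
    omega
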